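/- Let G be a multigraph given by a finite vertex type V, a finite edge type E, and an endpoint map ε, let G_s be its underlying simple graph, and let L*(G) be the partially reflexive graph on the edge set of G_s in which distinct edges of G_s are related iff they share a vertex and an edge p of G_s carries a loop iff at least two distinct edges of E have endpoint pair p. (i) If L*(G) has a stable cut, then G has a multigraph matching cut. (ii) If G has a multigraph matching cut and every vertex of G is incident to at least 2 edges of E, then L*(G) has a stable cut. -/
import Mathlib


/-- `(A, B)` is a multigraph matching cut of the multigraph with vertex type
`V`, edge type `E` and endpoint map `ε`: a partition of `V` into two nonempty
sets such that every vertex is incident to at most one edge whose other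
endpoint lies on the opposite side of the partition. -/
def MGMatchingCut {V E : Type*} (ε : E → Sym2 V) (A B : Set V) : Prop :=
  A.Nonempty ∧ B.Nonempty ∧ Disjoint A B ∧ A ∪ B = Set.univ ∧
    (∀ v ∈ A, {e : E | ∃ u ∈ B, ε e = s(v, u)}.Subsingleton) ∧
    (∀ v ∈ B, {e : E | ∃ u ∈ A, ε e = s(v, u)}.Subsingleton)

/-- The multigraph with endpoint map `ε` has a multigraph matching cut. -/
def HasMGMatchingCut {V E : Type*} (ε : E → Sym2 V) : Prop :=
  ∃ A B : Set V, MGMatchingCut ε A B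

/-- The edge set of the underlying simple graph `G_s` of the multigraph with
endpoint map `ε`: the nondiagonal unordered pairs realised as the endpoint
pair of at least one edge. -/
def SimpleEdges {V E : Type*} (ε : E → Sym2 V) : Type _ :=
  {p : Sym2 V // ¬ p.IsDiag ∧ ∃ e : E, ε e = p}

/-- The partially reflexive graph `L*(G)` on the edge set of the underlying
simple graph `G_s`: distinct edges of `G_s` are related iff they share a
vertex, and an edge `p` of `G_s` carries a loop iff at least two distinct
edges of the multigraph have endpoint pair `p`. -/
def LStar {V E : Type*} (ε : E → Sym2 V) :
    SimpleEdges ε → SimpleEdges ε → Prop := fun p q =>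
  (p ≠ q ∧ ∃ v : V, v ∈ p.val ∧ v ∈ q.val) ∨
    (p = q ∧ ∃ e f : E, e ≠ f ∧ ε e = p.val ∧ ε f = q.val)

/-- `S` is an independent set of the partially reflexive graph given by the
symmetric relation `r` (loops allowed). -/
def PRIndep {W : Type*} (r : W → W → Prop) (S : Set W) : Prop :=
  ∀ u ∈ S, ∀ v ∈ S, ¬ r u v

/-- A stable cut of the partially reflexive graph given by `r`: an independent
set whose complement splits into two nonempty sets with no edges between. -/
def HasPRStableCut {W : Type*} (r : W → W → Prop) : Prop :=
  ∃ S : Set W, PRIndep r S ∧ ∃ A B : Set W, A.Nonempty ∧ B.Nonempty ∧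
    Disjoint A B ∧ A ∪ B = Sᶜ ∧ ∀ a ∈ A, ∀ b ∈ B, ¬ r a b

lemma sym2_exists_eq {α : Type*} (z : Sym2 α) : ∃ x y, z = s(x, y) := by
  induction z using Sym2.ind with
  | _ x y => exact ⟨x, y, rfl⟩

/-- Let `G` be a multigraph with finite vertex type `V`, finite edge type `E`
and endpoint map `ε` (each edge has two distinct endpoints).
(i) If `L*(G)` has a (partially reflexive) stable cut, then `G` has a
multigraph matching cut. (ii) If `G` has a multigraph matching cut and every
vertex is incident to at least two edges, then `L*(G)` has a stable cut. -/

theorem stmt16 {V E : Type*} [Fintype V] [Fintype E] (ε : E → Sym2 V)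
    (hloopless : ∀ e : E, ¬ (ε e).IsDiag) :
    (HasPRStableCut (LStar ε) → HasMGMatchingCut ε) ∧
      ((HasMGMatchingCut ε ∧ ∀ v : V, 2 ≤ Set.ncard {e : E | v ∈ ε e}) →
        HasPRStableCut (LStar ε)) := by
  constructor
  · -- (i)
    rintro ⟨S, hS, A, B, ⟨a, ha⟩, ⟨b, hb⟩, hdisjAB, hunion, hcross⟩
    set VA : Set V := {v | ∃ p ∈ A, v ∈ (p : SimpleEdges ε).val} with hVAdef
    -- every simple edge is in S, A or B
    have htri : ∀ p : SimpleEdges ε, p ∈ S ∨ p ∈ A ∨ p ∈ B := by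
      intro p
      by_cases hpS : p ∈ S
      · exact Or.inl hpS
      · right
        have : p ∈ A ∪ B := by rw [hunion]; exact hpS
        exact this
    -- a cross multiedge gives a simple edge in S
    have hmemS : ∀ (v u : V) (e : E), v ∈ VA → u ∉ VA → ε e = s(v, u) →
        (⟨ε e, hloopless e, e, rfl⟩ : SimpleEdges ε) ∈ S := by
      intro v u e hv hu he
      set pe : SimpleEdges ε := ⟨ε e, hloopless e, e, rfl⟩ with hpe
      rcases htri pe with h | h | h
      · exact h
      · exfalso
        exact hu ⟨pe, h, by show u ∈ ε e; rw [he]; exact Sym2.mem_mk_right v u⟩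
      · exfalso
        obtain ⟨q, hqA, hvq⟩ := hv
        have hne : q ≠ pe := fun hq => (Set.disjoint_left.mp hdisjAB hqA) (hq ▸ h)
        exact hcross q hqA pe h (Or.inl ⟨hne, v, hvq, by show v ∈ ε e; rw [he]; exact Sym2.mem_mk_left v u⟩)
    -- two cross multiedges at a common vertex coincide
    have tail : ∀ (v : V) (e f : E), v ∈ ε e → v ∈ ε f →
        (⟨ε e, hloopless e, e, rfl⟩ : SimpleEdges ε) ∈ S →
        (⟨ε f, hloopless f, f, rfl⟩ : SimpleEdges ε) ∈ S → e = f := by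
      intro v e f hve hvf heS hfS
      set pe : SimpleEdges ε := ⟨ε e, hloopless e, e, rfl⟩ with hpe
      set pf : SimpleEdges ε := ⟨ε f, hloopless f, f, rfl⟩ with hpf
      by_cases hpq : pe = pf
      · by_contra hef
        exact hS pe heS pf hfS (Or.inr ⟨hpq, e, f, hef, rfl, rfl⟩)
      · exact absurd (Or.inl ⟨hpq, v, hve, hvf⟩) (hS pe heS pf hfS)
    refine ⟨VA, VAᶜ, ?_, ?_, disjoint_compl_right, Set.union_compl_self VA, ?_, ?_⟩
    · obtain ⟨x, y, hxy⟩ := sym2_exists_eq a.val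
      exact ⟨x, a, ha, by rw [hxy]; exact Sym2.mem_mk_left x y⟩
    · obtain ⟨x, y, hxy⟩ := sym2_exists_eq b.val
      refine ⟨x, fun hx => ?_⟩
      obtain ⟨q, hqA, hxq⟩ := hx
      have hne : q ≠ b := fun hq => (Set.disjoint_left.mp hdisjAB hqA) (hq ▸ hb)
      exact hcross q hqA b hb (Or.inl ⟨hne, x, hxq, by rw [hxy]; exact Sym2.mem_mk_left x y⟩)
    · intro v hv e he f hf
      obtain ⟨u, hu, heu⟩ := he
      obtain ⟨u', hu', hfu⟩ := hf
      exact tail v e f (by rw [heu]; exact Sym2.mem_mk_left v u)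
        (by rw [hfu]; exact Sym2.mem_mk_left v u')
        (hmemS v u e hv hu heu) (hmemS v u' f hv hu' hfu)
    · intro v hv e he f hf
      obtain ⟨u, hu, heu⟩ := he
      obtain ⟨u', hu', hfu⟩ := hf
      exact tail v e f (by rw [heu]; exact Sym2.mem_mk_left v u)
        (by rw [hfu]; exact Sym2.mem_mk_left v u')
        (hmemS u v e hu hv (heu.trans Sym2.eq_swap))
        (hmemS u' v f hu' hv (hfu.trans Sym2.eq_swap))
  · -- (ii)
    rintro ⟨⟨VA, VB, hVAne, hVBne, hdisj, hunion, hcA, hcB⟩, hdeg⟩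
    have htot : ∀ w : V, w ∈ VA ∨ w ∈ VB := by
      intro w
      have : w ∈ VA ∪ VB := by rw [hunion]; trivial
      exact this
    have hnot : ∀ w : V, w ∈ VA → w ∈ VB → False :=
      fun w h1 h2 => Set.disjoint_left.mp hdisj h1 h2
    set S : Set (SimpleEdges ε) := {p | ∃ v ∈ VA, ∃ u ∈ VB, p.val = s(v, u)} with hSdef
    set AE : Set (SimpleEdges ε) := {p | ∀ w ∈ p.val, w ∈ VA} with hAEdef
    set BE : Set (SimpleEdges ε) := {p | ∀ w ∈ p.val, w ∈ VB} with hBEdef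
    -- shape lemmas
    have hShapeA : ∀ p ∈ S, ∀ w ∈ (Subtype.val p), w ∈ VA → ∃ u ∈ VB, p.val = s(w, u) := by
      intro p hp w hw hwA
      obtain ⟨v, hv, u, hu, hval⟩ := hp
      rw [hval] at hw
      rcases Sym2.mem_iff.mp hw with h | h
      · exact ⟨u, hu, by rw [hval, h]⟩
      · exact absurd hu (fun hu' => hnot w hwA (h ▸ hu'))
    have hShapeB : ∀ p ∈ S, ∀ w ∈ (Subtype.val p), w ∈ VB → ∃ u ∈ VA, p.val = s(w, u) := by
      intro p hp w hw hwB
      obtain ⟨v, hv, u, hu, hval⟩ := hp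
      rw [hval] at hw
      rcases Sym2.mem_iff.mp hw with h | h
      · exact absurd hv (fun hv' => hnot w (h ▸ hv') hwB)
      · exact ⟨v, hv, by rw [hval, h, Sym2.eq_swap]⟩
    -- a nonempty side lemma
    have hside : ∀ (X Y : Set V), (∀ w, w ∈ X ∨ w ∈ Y) → (∀ w, w ∈ X → w ∈ Y → False) →
        (∀ v ∈ X, {e : E | ∃ u ∈ Y, ε e = s(v, u)}.Subsingleton) →
        ∀ v ∈ X, ∃ p : SimpleEdges ε, ∀ w ∈ (Subtype.val p), w ∈ X := by
      intro X Y htot' hnot' hc v hv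
      have hfin : ({e : E | v ∈ ε e}).Finite := Set.toFinite _
      obtain ⟨e, f, he, hf, hef⟩ := (Set.one_lt_ncard_iff hfin).mp (lt_of_lt_of_le one_lt_two (hdeg v))
      have hex : ∃ g : E, v ∈ ε g ∧ ¬∃ u ∈ Y, ε g = s(v, u) := by
        by_contra h
        push_neg at h
        exact hef (hc v hv (h e he) (h f hf))
      obtain ⟨g, hvg, hgC⟩ := hex
      obtain ⟨x, y, hxy⟩ := sym2_exists_eq (ε g)
      have hxyne : x ≠ y := fun h => hloopless g (by rw [hxy]; exact Sym2.mk_isDiag_iff.mpr h)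
      rcases Sym2.mem_iff.mp (hxy ▸ hvg) with hvx | hvy
      · -- v = x, other endpoint y
        have hyX : y ∈ X := by
          rcases htot' y with h | h
          · exact h
          · exact absurd ⟨y, h, by rw [hxy, hvx]⟩ hgC
        refine ⟨⟨ε g, hloopless g, g, rfl⟩, ?_⟩
        intro w hw
        have hw2 : w ∈ ε g := hw
        rw [hxy] at hw2
        rcases Sym2.mem_iff.mp hw2 with h | h
        · exact h ▸ (hvx ▸ hv)
        · exact h ▸ hyX
      · -- v = y, other endpoint x
        have hxX : x ∈ X := by
          rcases htot' x with h | h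
          · exact h
          · exact absurd ⟨x, h, by rw [hxy, hvy, Sym2.eq_swap]⟩ hgC
        refine ⟨⟨ε g, hloopless g, g, rfl⟩, ?_⟩
        intro w hw
        have hw2 : w ∈ ε g := hw
        rw [hxy] at hw2
        rcases Sym2.mem_iff.mp hw2 with h | h
        · exact h ▸ hxX
        · exact h ▸ (hvy ▸ hv)
    refine ⟨S, ?_, AE, BE, ?_, ?_, ?_, ?_, ?_⟩
    · -- independence
      intro p hp q hq hr
      rcases hr with ⟨hne, w, hwp, hwq⟩ | ⟨heq, e, f, hef, he, hf⟩
      · have hvalne : p.val ≠ q.val := fun h => hne (Subtype.ext h)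
        rcases htot w with hwA | hwB
        · obtain ⟨u, hu, hp'⟩ := hShapeA p hp w hwp hwA
          obtain ⟨u', hu', hq'⟩ := hShapeA q hq w hwq hwA
          obtain ⟨e, he⟩ := p.2.2
          obtain ⟨f, hf⟩ := q.2.2
          have : e = f := hcA w hwA ⟨u, hu, he.trans hp'⟩ ⟨u', hu', hf.trans hq'⟩
          exact hvalne (he ▸ hf ▸ this ▸ rfl)
        · obtain ⟨u, hu, hp'⟩ := hShapeB p hp w hwp hwB
          obtain ⟨u', hu', hq'⟩ := hShapeB q hq w hwq hwB
          obtain ⟨e, he⟩ := p.2.2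
          obtain ⟨f, hf⟩ := q.2.2
          have : e = f := hcB w hwB ⟨u, hu, he.trans hp'⟩ ⟨u', hu', hf.trans hq'⟩
          exact hvalne (he ▸ hf ▸ this ▸ rfl)
      · obtain ⟨v, hv, u, hu, hval⟩ := hp
        have hqval : q.val = s(v, u) := by rw [← heq, hval]
        exact hef (hcA v hv ⟨u, hu, he.trans hval⟩ ⟨u, hu, hf.trans hqval⟩)
    · -- AE nonempty
      obtain ⟨v, hv⟩ := hVAne
      obtain ⟨p, hp⟩ := hside VA VB htot hnot hcA v hv
      exact ⟨p, hp⟩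
    · -- BE nonempty
      obtain ⟨v, hv⟩ := hVBne
      obtain ⟨p, hp⟩ := hside VB VA (fun w => (htot w).symm) (fun w h1 h2 => hnot w h2 h1) hcB v hv
      exact ⟨p, hp⟩
    · -- disjoint AE BE
      rw [Set.disjoint_left]
      intro p hpA hpB
      obtain ⟨x, y, hxy⟩ := sym2_exists_eq p.val
      have hx : x ∈ Subtype.val p := by rw [hxy]; exact Sym2.mem_mk_left x y
      exact hnot x (hpA x hx) (hpB x hx)
    · -- union = Sᶜ
      ext p
      simp only [Set.mem_union, Set.mem_compl_iff]
      constructor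
      · rintro (hA | hB) hpS
        · obtain ⟨v, hv, u, hu, hval⟩ := hpS
          exact hnot u (hA u (by rw [hval]; exact Sym2.mem_mk_right v u)) hu
        · obtain ⟨v, hv, u, hu, hval⟩ := hpS
          exact hnot v hv (hB v (by rw [hval]; exact Sym2.mem_mk_left v u))
      · intro hpS
        obtain ⟨x, y, hxy⟩ := sym2_exists_eq p.val
        rcases htot x with hxA | hxB <;> rcases htot y with hyA | hyB
        · left
          intro w hw
          rw [hxy] at hw
          rcases Sym2.mem_iff.mp hw with h | h
          · exact h ▸ hxA
          · exact h ▸ hyA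
        · exact absurd ⟨x, hxA, y, hyB, hxy⟩ hpS
        · exact absurd ⟨y, hyA, x, hxB, hxy.trans Sym2.eq_swap⟩ hpS
        · right
          intro w hw
          rw [hxy] at hw
          rcases Sym2.mem_iff.mp hw with h | h
          · exact h ▸ hxB
          · exact h ▸ hyB
    · -- no edges between AE and BE
      intro a ha b hb hr
      rcases hr with ⟨hne, w, hwa, hwb⟩ | ⟨heq, _⟩
      · exact hnot w (ha w hwa) (hb w hwb)
      · subst heq
        obtain ⟨x, y, hxy⟩ := sym2_exists_eq a.val
        have hx : x ∈ Subtype.val a := by rw [hxy]; exact Sym2.mem_mk_left x y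
        exact hnot x (ha x hx) (hb x hx)
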